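/- Let (X,d_X) and (I,d_I) be pseudo-distance spaces, let (A_t)_{t∈I} be a family of nonempty subsets of X, and let f : X → ℝ be Λ-Lipschitz continuous on (X,d_X) for some Λ > 0. Assume there exists α > 0 such that D_{H,X}(A_t,A_s) ≤ α·d_I(t,s) for all t,s ∈ I (inequality in [-∞,∞]), and that SUP_f(A_t) ∈ ℝ for all t ∈ I. Then the function φ*(t) := SUP_f(A_t) is αΛ-Lipschitz continuous on (I,d_I): |φ*(t) − φ*(s)| ≤ αΛ·d_I(t,s) for all t,s ∈ I, the inequality understood in [-∞,∞]. -/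

import Mathlib

/-- The distance from a point to a set, induced by an arbitrary
pseudo-distance `d : X → X → EReal`. -/
noncomputable def distSet {X : Type*} (d : X → X → EReal) (x : X) (A : Set X) : EReal :=
  ⨅ a ∈ A, d x a

/-- The asymmetric Hausdorff distance induced by `d`. -/
noncomputable def DasyH {X : Type*} (d : X → X → EReal) (A A' : Set X) : EReal :=
  ⨆ a ∈ A, distSet d a A'

/-- The (symmetric) Hausdorff distance induced by `d`. -/
noncomputable def DH {X : Type*} (d : X → X → EReal) (A A' : Set X) : EReal :=
  max (DasyH d A A') (DasyH d A' A)

/-- The supremum operator `SUP_f`. -/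
noncomputable def SUPf {X : Type*} (f : X → ℝ) (A : Set X) : EReal :=
  ⨆ a ∈ A, (f a : EReal)

/-- **Lipschitz continuity of the optimal value function.**
If `f` is `Λ`-Lipschitz continuous on `(X, dX)`, `D_{H,X}(A t, A s) ≤ α · dI t s` for
all `t, s ∈ I` and `SUP_f(A t) ∈ ℝ` for all `t`, then `φ*(t) := SUP_f(A t)` is
`αΛ`-Lipschitz continuous on `(I, dI)`. -/
lemma ereal_nonneg_of_mul {Λ : ℝ} (hΛ : 0 < Λ) {e : EReal} (h : 0 ≤ (Λ : EReal) * e) :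
    (0 : EReal) ≤ e := by
  induction e using EReal.rec with
  | bot => rw [EReal.coe_mul_bot_of_pos hΛ] at h; exact absurd h (by simp)
  | coe c =>
      rw [← EReal.coe_mul] at h
      have : (0:ℝ) ≤ Λ * c := by exact_mod_cast h
      exact_mod_cast nonneg_of_mul_nonneg_right this hΛ
  | top => exact le_top

theorem optimal_value_sup_lipschitz {X : Type*} {I : Type*} [Nonempty X] [Nonempty I]
    (dX : X → X → EReal) (dI : I → I → EReal)
    (A : I → Set X) (hA : ∀ t, (A t).Nonempty)
    (f : X → ℝ) (Λ : ℝ) (hΛ : 0 < Λ)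
    (hf : ∀ x y : X, ((|f x - f y| : ℝ) : EReal) ≤ (Λ : EReal) * dX x y)
    (α : ℝ) (hα : 0 < α)
    (hH : ∀ t s : I, DH dX (A t) (A s) ≤ (α : EReal) * dI t s)
    (hfin : ∀ t : I, ∃ r : ℝ, SUPf f (A t) = (r : EReal)) :
    ∀ t s : I,
      ((|(SUPf f (A t)).toReal - (SUPf f (A s)).toReal| : ℝ) : EReal)
        ≤ ((α * Λ : ℝ) : EReal) * dI t s := by
  -- dX is nonnegative
  have hdX : ∀ x y, (0 : EReal) ≤ dX x y := fun x y =>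
    ereal_nonneg_of_mul hΛ (le_trans (by exact_mod_cast abs_nonneg _) (hf x y))
  have hdistSet : ∀ (x : X) (B : Set X), (0 : EReal) ≤ distSet dX x B := by
    intro x B
    exact le_iInf₂ fun b _ => hdX x b
  have hDH : ∀ t s, (0 : EReal) ≤ DH dX (A t) (A s) := by
    intro t s
    obtain ⟨a, ha⟩ := hA t
    exact le_trans (le_trans (hdistSet a (A s)) (le_iSup₂ (f := fun a _ => distSet dX a (A s)) a ha))
      (le_max_left _ _)
  have hdI : ∀ t s, (0 : EReal) ≤ dI t s := fun t s =>
    ereal_nonneg_of_mul hα (le_trans (hDH t s) (hH t s))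
  intro t s
  -- case split on dI t s
  rcases eq_or_ne (dI t s) ⊤ with htop | hne_top'
  · rw [htop, show ((α * Λ : ℝ) : EReal) * ⊤ = ⊤ from EReal.coe_mul_top_of_pos (by positivity)]
    exact le_top
  · have hne_bot' : dI t s ≠ ⊥ := ne_bot_of_le_ne_bot (by simp) (hdI t s)
    set r : ℝ := (dI t s).toReal with hr
    have hdts : dI t s = (r : EReal) := (EReal.coe_toReal hne_top' hne_bot').symm
      -- key one-sided estimate
    have key : ∀ u v : I, DasyH dX (A u) (A v) ≤ ((α * r : ℝ) : EReal) →
        (SUPf f (A u)).toReal ≤ (SUPf f (A v)).toReal + α * Λ * r := by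
      intro u v huv
      obtain ⟨pu, hpu⟩ := hfin u
      obtain ⟨pv, hpv⟩ := hfin v
      rw [hpu, hpv, EReal.toReal_coe, EReal.toReal_coe]
      -- it suffices to bound f a for each a ∈ A u
      have hstep : ∀ a ∈ A u, f a ≤ pv + α * Λ * r := by
        intro a ha
        refine le_of_forall_pos_le_add fun δ hδ => ?_
        set ε : ℝ := δ / Λ with hε
        have hεpos : 0 < ε := div_pos hδ hΛ
        -- distSet dX a (A v) ≤ α * r
        have h1 : distSet dX a (A v) ≤ ((α * r : ℝ) : EReal) :=
          le_trans (le_iSup₂ (f := fun a _ => distSet dX a (A v)) a ha) huv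
        have h2 : distSet dX a (A v) < ((α * r + ε : ℝ) : EReal) :=
          lt_of_le_of_lt h1 (by exact_mod_cast lt_add_of_pos_right _ hεpos)
        rw [distSet, iInf_lt_iff] at h2
        obtain ⟨b, h2⟩ := h2
        rw [iInf_lt_iff] at h2
        obtain ⟨hb, h2⟩ := h2
        -- dX a b is a finite nonnegative real
        have hne_top : dX a b ≠ ⊤ := ne_top_of_lt (lt_of_lt_of_le h2 le_top)
        have hne_bot : dX a b ≠ ⊥ := ne_bot_of_le_ne_bot (by simp) (hdX a b)
        set c : ℝ := (dX a b).toReal with hc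
        have hcoe : (c : EReal) = dX a b := EReal.coe_toReal hne_top hne_bot
        have hclt : c < α * r + ε := by
          rw [← EReal.coe_lt_coe_iff, hcoe]; exact h2
        -- Lipschitz bound
        have hlip : |f a - f b| ≤ Λ * c := by
          have := hf a b
          rw [← hcoe, ← EReal.coe_mul] at this
          exact_mod_cast this
        -- f b ≤ pv
        have hfb : f b ≤ pv := by
          have : (f b : EReal) ≤ SUPf f (A v) :=
            le_iSup₂ (f := fun b _ => ((f b : ℝ) : EReal)) b hb
          rw [hpv] at this
          exact_mod_cast this
        have : f a - f b ≤ Λ * (α * r + ε) :=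
          le_trans (le_trans (le_abs_self _) hlip)
            (by nlinarith)
        have hδε : Λ * ε = δ := by rw [hε]; field_simp
        nlinarith
      -- take sup over a ∈ A u
      have : SUPf f (A u) ≤ ((pv + α * Λ * r : ℝ) : EReal) :=
        iSup₂_le fun a ha => by exact_mod_cast hstep a ha
      rw [hpu] at this
      exact_mod_cast this
    have hbound : (α : EReal) * dI t s = ((α * r : ℝ) : EReal) := by
      rw [hdts, EReal.coe_mul]
    have k1 := key t s (le_trans (le_trans (le_max_left _ _) (hH t s)) hbound.le)
    have k2 := key s t (le_trans (le_trans (le_max_right _ _) (hH t s)) hbound.le)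
    rw [hdts, ← EReal.coe_mul, EReal.coe_le_coe_iff]
    rw [abs_sub_le_iff]
    constructor <;> nlinarith
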